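/- Let X be a metric space and suppose a closed curve γ : S¹ → X can be subdivided into four consecutive arcs α, β, α′, β′ such that dist(x, x′) > a for all x ∈ α, x′ ∈ α′, and dist(y, y′) > a for all y ∈ β, y′ ∈ β′. Then for any continuous extension h : D² → X of γ to the disk, there exists a point z ∈ D² such that dist(h(z), γ(t)) ≥ a/2 for all t; in particular γ is not contractible within its (a/2)-neighborhood. -/

import Mathlib

def Dv : ZMod 4 → ZMod 4 → ℤ := fun c c' =>
  if c' - c = 1 then 1 else if c' - c = 3 then -1 else 0

lemma Dv_self : ∀ c : ZMod 4, Dv c c = 0 := by decide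

lemma Dv_up : ∀ c : ZMod 4, Dv c (c + 1) = 1 := by decide

lemma Dv_down : ∀ c : ZMod 4, Dv (c + 1) c = -1 := by decide

lemma Dv_cell : ∀ c1 c2 c3 c4 : ZMod 4, c1 - c2 ≠ 2 → c2 - c3 ≠ 2 → c3 - c4 ≠ 2 →
    c4 - c1 ≠ 2 → c1 - c3 ≠ 2 → c2 - c4 ≠ 2 →
    Dv c1 c2 + Dv c2 c3 = Dv c1 c4 + Dv c4 c3 := by decide

lemma Dv_cast : ∀ c c' : ZMod 4, c' - c ≠ 2 → ((Dv c c' : ℤ) : ZMod 4) = c' - c := by decide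

lemma walk_step (k φ : ℤ) (c c' : ZMod 4) (h1 : φ = k ∨ φ = k + 1)
    (h2 : (φ : ZMod 4) = c)
    (hc' : c' = (k : ZMod 4) + 1 ∨ c' = (k : ZMod 4) + 2)
    (hne : c' - c ≠ 2) :
    φ + Dv c c' = k + 1 ∨ φ + Dv c c' = k + 2 := by
  subst h2
  rcases h1 with h | h <;> rw [h] at hne ⊢ <;> rcases hc' with h' | h' <;>
      rw [h'] at hne ⊢
  · left; rw [Dv_up]
  · exact absurd (by push_cast; ring) hne
  · left
    have e : (((k + 1 : ℤ)) : ZMod 4) = ((k : ℤ) : ZMod 4) + 1 := by push_cast; ring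
    rw [e, Dv_self]; ring
  · right
    have e : (((k + 1 : ℤ)) : ZMod 4) = ((k : ℤ) : ZMod 4) + 1 := by push_cast; ring
    rw [e, show ((k : ℤ) : ZMod 4) + 2 = (((k : ℤ) : ZMod 4) + 1) + 1 by ring, Dv_up]
    ring

lemma walk_stay (k φ : ℤ) (c c' : ZMod 4) (h1 : φ = k ∨ φ = k + 1)
    (h2 : (φ : ZMod 4) = c)
    (hc' : c' = (k : ZMod 4) ∨ c' = (k : ZMod 4) + 1) :
    φ + Dv c c' = k ∨ φ + Dv c c' = k + 1 := by
  subst h2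
  rcases h1 with h | h <;> rw [h] <;> rcases hc' with h' | h' <;> rw [h']
  · left; rw [Dv_self]; ring
  · right; rw [Dv_up]
  · left
    have e : (((k + 1 : ℤ)) : ZMod 4) = ((k : ℤ) : ZMod 4) + 1 := by push_cast; ring
    rw [e, Dv_down]; ring
  · right
    have e : (((k + 1 : ℤ)) : ZMod 4) = ((k : ℤ) : ZMod 4) + 1 := by push_cast; ring
    rw [e, Dv_self]; ring

open unitInterval

set_option maxHeartbeats 4000000

/-- **Four-arc non-contractibility lemma.** Let `γ` be a closed curve in a metric space `X`
subdivided by `0 ≤ t₁ ≤ t₂ ≤ t₃ ≤ 1` into four consecutive arcs `α, β, α', β'` such that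
`dist (x, x') > a` for `x ∈ α`, `x' ∈ α'`, and `dist (y, y') > a` for `y ∈ β`, `y' ∈ β'`.
Then any null-homotopy `H` of `γ` (i.e. any extension of `γ` to the disk) passes through a
point at distance at least `a/2` from the whole curve `γ`; in particular `γ` is not
contractible within its `a/2`-neighborhood. -/
theorem not_contractible_in_small_neighborhood
    {X : Type*} [MetricSpace X] (a : ℝ)
    (γ : C(unitInterval, X)) (hloop : γ 0 = γ 1)
    (t₁ t₂ t₃ : unitInterval) (h12 : t₁ ≤ t₂) (h23 : t₂ ≤ t₃)
    (hαα' : ∀ x ∈ Set.Icc (0 : unitInterval) t₁, ∀ x' ∈ Set.Icc t₂ t₃,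
      a < dist (γ x) (γ x'))
    (hββ' : ∀ y ∈ Set.Icc t₁ t₂, ∀ y' ∈ Set.Icc t₃ (1 : unitInterval),
      a < dist (γ y) (γ y'))
    (H : C(unitInterval × unitInterval, X))
    (hH₀ : ∀ s : unitInterval, H (s, 0) = γ s)
    (hHloop : ∀ t : unitInterval, H (0, t) = H (1, t))
    (x₀ : X) (hH₁ : ∀ s : unitInterval, H (s, 1) = x₀) :
    ∃ z : unitInterval × unitInterval, ∀ u : unitInterval, a / 2 ≤ dist (H z) (γ u) := by
  classical
  rcases le_or_gt a 0 with ha | ha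
  · exact ⟨(0, 0), fun u => le_trans (by linarith) dist_nonneg⟩
  by_contra hcon
  push_neg at hcon
  -- the two reference arcs
  set SA : Set X := γ '' Set.Icc 0 t₁ with hSAdef
  set SB : Set X := γ '' Set.Icc t₁ t₂ with hSBdef
  have hIccC : ∀ s t : unitInterval, IsCompact (Set.Icc s t) := fun s t =>
    isClosed_Icc.isCompact
  have hSAc : IsCompact SA := (hIccC 0 t₁).image γ.continuous
  have hSBc : IsCompact SB := (hIccC t₁ t₂).image γ.continuous
  have hSAne : SA.Nonempty := ⟨γ 0, Set.mem_image_of_mem γ ⟨le_refl 0, nonneg'⟩⟩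
  have hSBne : SB.Nonempty := ⟨γ t₁, Set.mem_image_of_mem γ ⟨le_refl t₁, h12⟩⟩
  set w₁ : X → ℝ := fun x => min a (Metric.infDist x SA) with hw₁def
  set w₂ : X → ℝ := fun x => min a (Metric.infDist x SB) with hw₂def
  -- Lipschitz bounds
  have hlip : ∀ (S : Set X) (x y : X),
      |min a (Metric.infDist x S) - min a (Metric.infDist y S)| ≤ dist x y := by
    intro S x y
    have h1 : Metric.infDist x S ≤ Metric.infDist y S + dist x y :=
      Metric.infDist_le_infDist_add_dist
    have h2 : Metric.infDist y S ≤ Metric.infDist x S + dist y x :=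
      Metric.infDist_le_infDist_add_dist
    rw [dist_comm y x] at h2
    have h3 : (0:ℝ) ≤ dist x y := dist_nonneg
    rw [abs_le, min_def, min_def]
    constructor <;> split_ifs <;> linarith
  have hlip₁ : ∀ x y : X, |w₁ x - w₁ y| ≤ dist x y := fun x y => hlip SA x y
  have hlip₂ : ∀ x y : X, |w₂ x - w₂ y| ≤ dist x y := fun x y => hlip SB x y
  -- values on the arcs
  have hw₁A : ∀ x ∈ SA, w₁ x = 0 := by
    intro x hx
    simp only [hw₁def, Metric.infDist_zero_of_mem hx, min_eq_right ha.le]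
  have hw₂B : ∀ x ∈ SB, w₂ x = 0 := by
    intro x hx
    simp only [hw₂def, Metric.infDist_zero_of_mem hx, min_eq_right ha.le]
  have hw₁C : ∀ s ∈ Set.Icc t₂ t₃, w₁ (γ s) = a := by
    intro s hs
    have hle : a ≤ Metric.infDist (γ s) SA := by
      obtain ⟨y, hy, hyd⟩ := hSAc.exists_infDist_eq_dist hSAne (γ s)
      obtain ⟨x, hx, rfl⟩ := hy
      rw [hyd, dist_comm]
      exact (hαα' x hx s hs).le
    simp only [hw₁def, min_eq_left hle]
  have hw₂D : ∀ s ∈ Set.Icc t₃ (1 : unitInterval), w₂ (γ s) = a := by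
    intro s hs
    have hle : a ≤ Metric.infDist (γ s) SB := by
      obtain ⟨y, hy, hyd⟩ := hSBc.exists_infDist_eq_dist hSBne (γ s)
      obtain ⟨x, hx, rfl⟩ := hy
      rw [hyd, dist_comm]
      exact (hββ' x hx s hs).le
    simp only [hw₂def, min_eq_left hle]
  -- the homotopy image avoids the "center"
  set F : unitInterval × unitInterval → ℝ :=
    fun z => max |w₁ (H z) - a / 2| |w₂ (H z) - a / 2| with hFdef
  have hFpos : ∀ z, 0 < F z := by
    intro z
    obtain ⟨u, hu⟩ := hcon z
    rcases le_total u t₂ with hu2 | hu2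
    · rcases le_total u t₁ with hu1 | hu1
      · -- u in arc α : w₁ (H z) < a/2
        have h1 : w₁ (H z) ≤ dist (H z) (γ u) := by
          simp only [hw₁def]
          exact le_trans (min_le_right _ _)
            (Metric.infDist_le_dist_of_mem (Set.mem_image_of_mem γ ⟨nonneg', hu1⟩))
        have : |w₁ (H z) - a / 2| > 0 :=
          abs_pos.mpr (by intro h; rw [sub_eq_zero] at h; linarith)
        exact lt_max_of_lt_left this
      · -- u in arc β : w₂ (H z) < a/2
        have h1 : w₂ (H z) ≤ dist (H z) (γ u) := by
          simp only [hw₂def]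
          exact le_trans (min_le_right _ _)
            (Metric.infDist_le_dist_of_mem (Set.mem_image_of_mem γ ⟨hu1, hu2⟩))
        have : |w₂ (H z) - a / 2| > 0 :=
          abs_pos.mpr (by intro h; rw [sub_eq_zero] at h; linarith)
        exact lt_max_of_lt_right this
    · rcases le_total u t₃ with hu3 | hu3
      · -- u in arc α' : w₁ (H z) > a/2
        have h1 : a / 2 < Metric.infDist (H z) SA := by
          obtain ⟨y, hy, hyd⟩ := hSAc.exists_infDist_eq_dist hSAne (H z)
          obtain ⟨x, hx, rfl⟩ := hy
          have hd := hαα' x hx u ⟨hu2, hu3⟩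
          have htri := dist_triangle (γ x) (H z) (γ u)
          rw [hyd, dist_comm]
          linarith
        have h2 : a / 2 < w₁ (H z) := by
          simp only [hw₁def]; exact lt_min (by linarith) h1
        have : |w₁ (H z) - a / 2| > 0 :=
          abs_pos.mpr (by intro h; rw [sub_eq_zero] at h; linarith)
        exact lt_max_of_lt_left this
      · -- u in arc β' : w₂ (H z) > a/2
        have h1 : a / 2 < Metric.infDist (H z) SB := by
          obtain ⟨y, hy, hyd⟩ := hSBc.exists_infDist_eq_dist hSBne (H z)
          obtain ⟨x, hx, rfl⟩ := hy
          have hd := hββ' x hx u ⟨hu3, le_one'⟩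
          have htri := dist_triangle (γ x) (H z) (γ u)
          rw [hyd, dist_comm]
          linarith
        have h2 : a / 2 < w₂ (H z) := by
          simp only [hw₂def]; exact lt_min (by linarith) h1
        have : |w₂ (H z) - a / 2| > 0 :=
          abs_pos.mpr (by intro h; rw [sub_eq_zero] at h; linarith)
        exact lt_max_of_lt_right this
  have hFcont : Continuous F := by
    simp only [hFdef, hw₁def, hw₂def]
    apply Continuous.max
    · exact (((continuous_const.min ((Metric.continuous_infDist_pt SA).comp
        H.continuous))).sub continuous_const).abs
    · exact (((continuous_const.min ((Metric.continuous_infDist_pt SB).comp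
        H.continuous))).sub continuous_const).abs
  obtain ⟨z₀, -, hz₀⟩ := isCompact_univ.exists_isMinOn (Set.univ_nonempty) hFcont.continuousOn
  set δ : ℝ := F z₀ with hδdef
  have hδpos : 0 < δ := hFpos z₀
  have hδle : ∀ z, δ ≤ F z := fun z => hz₀ (Set.mem_univ z)
  -- uniform continuity of H
  obtain ⟨η, hηpos, hη⟩ := Metric.uniformContinuous_iff.mp
    (CompactSpace.uniformContinuous_of_continuous H.continuous) δ hδpos
  -- strictness of the subdivision
  have ht1pos : (0:ℝ) < t₁ := by
    rcases eq_or_lt_of_le (nonneg' : (0:unitInterval) ≤ t₁) with h | h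
    · exfalso
      have h2 := hββ' t₁ ⟨le_refl _, h12⟩ 1 ⟨le_one', le_refl _⟩
      rw [← h, ← hloop, dist_self] at h2
      linarith
    · exact h
  have ht12 : (t₁:ℝ) < t₂ := by
    rcases eq_or_lt_of_le h12 with h | h
    · exfalso
      have h2 := hαα' t₁ ⟨nonneg', le_refl _⟩ t₂ ⟨le_refl _, h23⟩
      rw [h, dist_self] at h2
      linarith
    · exact h
  have ht23 : (t₂:ℝ) < t₃ := by
    rcases eq_or_lt_of_le h23 with h | h
    · exfalso
      have h2 := hββ' t₂ ⟨h12, le_refl _⟩ t₃ ⟨le_refl _, le_one'⟩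
      rw [h, dist_self] at h2
      linarith
    · exact h
  -- choice of the mesh
  obtain ⟨n, hn⟩ := exists_nat_one_div_lt
    (lt_min hηpos (lt_min (by linarith : (0:ℝ) < (t₂:ℝ) - t₁) (by linarith : (0:ℝ) < (t₃:ℝ) - t₂)))
  set N : ℕ := n + 1 with hNdef
  have hNpos : (0:ℝ) < N := by positivity
  have hn' : 1 / (N:ℝ) < min η (min ((t₂:ℝ) - t₁) ((t₃:ℝ) - t₂)) := by
    rw [hNdef]; push_cast; exact hn
  have hmeshη : 1 / (N:ℝ) < η := lt_of_lt_of_le hn' (min_le_left _ _)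
  have hmesh12 : 1 / (N:ℝ) < (t₂:ℝ) - t₁ :=
    lt_of_lt_of_le hn' (le_trans (min_le_right _ _) (min_le_left _ _))
  have hmesh23 : 1 / (N:ℝ) < (t₃:ℝ) - t₂ :=
    lt_of_lt_of_le hn' (le_trans (min_le_right _ _) (min_le_right _ _))
  -- grid points
  set s : ℕ → unitInterval := fun i => Set.projIcc 0 1 zero_le_one ((i:ℝ) / N) with hsdef
  have hsv : ∀ i, i ≤ N → (s i : ℝ) = (i:ℝ) / N := by
    intro i hi
    have hmem : ((i:ℝ) / N) ∈ Set.Icc (0:ℝ) 1 := by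
      constructor
      · positivity
      · rw [div_le_one hNpos]; exact_mod_cast hi
    simp only [hsdef, Set.projIcc_of_mem zero_le_one hmem]
  have hs0 : s 0 = 0 := by
    apply Subtype.ext
    rw [hsv 0 (Nat.zero_le _)]
    simp
  have hsN : s N = 1 := by
    apply Subtype.ext
    rw [hsv N (le_refl _)]
    simp only [Set.Icc.coe_one]
    field_simp
  -- the color of a point of X
  set col : X → ZMod 4 := fun x =>
    if 0 < w₁ x - a / 2 ∧ 0 ≤ w₂ x - a / 2 then 0
    else if w₁ x - a / 2 ≤ 0 ∧ 0 < w₂ x - a / 2 then 1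
    else if w₁ x - a / 2 < 0 ∧ w₂ x - a / 2 ≤ 0 then 2
    else 3 with hcoldef
  -- characterizations
  have col0 : ∀ x : X, col x = 0 → 0 < w₁ x - a / 2 ∧ 0 ≤ w₂ x - a / 2 := by
    intro x h
    simp only [hcoldef] at h
    split_ifs at h with h1 h2 h3
    · exact h1
    · exact absurd h (by decide)
    · exact absurd h (by decide)
    · exact absurd h (by decide)
  have col1 : ∀ x : X, col x = 1 → w₁ x - a / 2 ≤ 0 ∧ 0 < w₂ x - a / 2 := by
    intro x h
    simp only [hcoldef] at h
    split_ifs at h with h1 h2 h3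
    · exact absurd h (by decide)
    · exact h2
    · exact absurd h (by decide)
    · exact absurd h (by decide)
  have col2 : ∀ x : X, col x = 2 → w₁ x - a / 2 < 0 ∧ w₂ x - a / 2 ≤ 0 := by
    intro x h
    simp only [hcoldef] at h
    split_ifs at h with h1 h2 h3
    · exact absurd h (by decide)
    · exact absurd h (by decide)
    · exact h3
    · exact absurd h (by decide)
  have col3 : ∀ z : unitInterval × unitInterval, col (H z) = 3 →
      0 ≤ w₁ (H z) - a / 2 ∧ w₂ (H z) - a / 2 < 0 := by
    intro z h
    have hδz := hδle z
    rw [hFdef] at hδz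
    simp only at hδz
    simp only [hcoldef] at h
    split_ifs at h with h1 h2 h3
    · exact absurd h (by decide)
    · exact absurd h (by decide)
    · exact absurd h (by decide)
    · -- ¬q0, ¬q1, ¬q2, and not both zero
      push_neg at h1 h2 h3
      have hv : w₂ (H z) - a / 2 < 0 := by
        rcases lt_trichotomy (w₂ (H z) - a / 2) 0 with hv | hv | hv
        · exact hv
        · -- v = 0
          exfalso
          have hu1 : w₁ (H z) - a / 2 ≤ 0 := by
            by_contra hc
            push_neg at hc
            exact absurd (h1 hc) (by linarith)
          have hu2 : 0 ≤ w₁ (H z) - a / 2 := by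
            by_contra hc
            push_neg at hc
            exact absurd (h3 hc) (by linarith)
          have hu : w₁ (H z) - a / 2 = 0 := le_antisymm hu1 hu2
          rw [hu, hv] at hδz
          simp at hδz
          linarith
        · -- v > 0 : then ¬q1 gives u > 0, then q0 holds, contradiction with ¬q0
          exfalso
          have hu : 0 < w₁ (H z) - a / 2 := by
            by_contra hc
            push_neg at hc
            have := h2 hc
            linarith
          have := h1 hu
          linarith
      refine ⟨?_, hv⟩
      by_contra hc
      push_neg at hc
      exact absurd (h3 hc) (by linarith)
  -- no two δ-close points of the image have opposite colors
  have key : ∀ z z' : unitInterval × unitInterval,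
      dist (H z) (H z') < δ → col (H z) - col (H z') ≠ 2 := by
    intro z z' hd hc
    have hall : ∀ c : ZMod 4, c = 0 ∨ c = 1 ∨ c = 2 ∨ c = 3 := by decide
    have e1 : |w₁ (H z) - w₁ (H z')| < δ := lt_of_le_of_lt (hlip₁ _ _) hd
    have e2 : |w₂ (H z) - w₂ (H z')| < δ := lt_of_le_of_lt (hlip₂ _ _) hd
    rw [abs_lt] at e1 e2
    have hδz : δ ≤ max |w₁ (H z) - a / 2| |w₂ (H z) - a / 2| := hδle z
    rcases hall (col (H z)) with h | h | h | h <;>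
        rcases hall (col (H z')) with h' | h' | h' | h' <;> rw [h, h'] at hc
    · exact absurd hc (by decide)
    · exact absurd hc (by decide)
    · -- (0,2)
      obtain ⟨hu, hv⟩ := col0 _ h
      obtain ⟨hu', hv'⟩ := col2 _ h'
      rcases le_max_iff.mp hδz with hm | hm
      · rw [abs_of_pos hu] at hm; linarith
      · rw [abs_of_nonneg hv] at hm; linarith
    · exact absurd hc (by decide)
    · exact absurd hc (by decide)
    · exact absurd hc (by decide)
    · exact absurd hc (by decide)
    · -- (1,3)
      obtain ⟨hu, hv⟩ := col1 _ h
      obtain ⟨hu', hv'⟩ := col3 _ h'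
      rcases le_max_iff.mp hδz with hm | hm
      · rw [abs_of_nonpos hu] at hm; linarith
      · rw [abs_of_pos hv] at hm; linarith
    · -- (2,0)
      obtain ⟨hu, hv⟩ := col2 _ h
      obtain ⟨hu', hv'⟩ := col0 _ h'
      rcases le_max_iff.mp hδz with hm | hm
      · rw [abs_of_neg hu] at hm; linarith
      · rw [abs_of_nonpos hv] at hm; linarith
    · exact absurd hc (by decide)
    · exact absurd hc (by decide)
    · exact absurd hc (by decide)
    · exact absurd hc (by decide)
    · -- (3,1)
      obtain ⟨hu, hv⟩ := col3 _ h
      obtain ⟨hu', hv'⟩ := col1 _ h'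
      rcases le_max_iff.mp hδz with hm | hm
      · rw [abs_of_nonneg hu] at hm; linarith
      · rw [abs_of_neg hv] at hm; linarith
    · exact absurd hc (by decide)
    · exact absurd hc (by decide)
  -- grid colors
  set cg : ℕ → ℕ → ZMod 4 := fun i j => col (H (s i, s j)) with hcgdef
  have hclose : ∀ i j i' j' : ℕ, i ≤ N → j ≤ N → i' ≤ N → j' ≤ N →
      |(i:ℝ) - i'| ≤ 1 → |(j:ℝ) - j'| ≤ 1 →
      dist (H (s i, s j)) (H (s i', s j')) < δ := by
    intro i j i' j' hi hj hi' hj' hdi hdj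
    apply hη
    rw [Prod.dist_eq]
    apply max_lt
    · rw [Subtype.dist_eq, Real.dist_eq, hsv i hi, hsv i' hi']
      have he : |(i:ℝ)/N - (i':ℝ)/N| = |(i:ℝ) - i'| / N := by
        rw [div_sub_div_same, abs_div, abs_of_pos hNpos]
      rw [he]
      calc |(i:ℝ) - (i':ℝ)| / N ≤ 1 / N := by gcongr
        _ < η := hmeshη
    · rw [Subtype.dist_eq, Real.dist_eq, hsv j hj, hsv j' hj']
      have he : |(j:ℝ)/N - (j':ℝ)/N| = |(j:ℝ) - j'| / N := by
        rw [div_sub_div_same, abs_div, abs_of_pos hNpos]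
      rw [he]
      calc |(j:ℝ) - (j':ℝ)| / N ≤ 1 / N := by gcongr
        _ < η := hmeshη
  have hopp : ∀ i j i' j' : ℕ, i ≤ N → j ≤ N → i' ≤ N → j' ≤ N →
      |(i:ℝ) - i'| ≤ 1 → |(j:ℝ) - j'| ≤ 1 →
      cg i j - cg i' j' ≠ 2 := fun i j i' j' hi hj hi' hj' hdi hdj =>
    key _ _ (hclose i j i' j' hi hj hi' hj' hdi hdj)
  have habs0 : ∀ k : ℕ, |(k:ℝ) - (k:ℝ)| ≤ 1 := by intro k; simp
  have habs1 : ∀ k : ℕ, |((k+1:ℕ):ℝ) - (k:ℝ)| ≤ 1 := by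
    intro k; push_cast; rw [add_sub_cancel_left]; simp
  have habs1' : ∀ k : ℕ, |(k:ℝ) - ((k+1:ℕ):ℝ)| ≤ 1 := by
    intro k; rw [abs_sub_comm]; exact habs1 k
  -- cell identity
  have hcell : ∀ m j : ℕ, m < N → j < N →
      Dv (cg m j) (cg (m+1) j) + Dv (cg (m+1) j) (cg (m+1) (j+1)) =
      Dv (cg m j) (cg m (j+1)) + Dv (cg m (j+1)) (cg (m+1) (j+1)) := by
    intro m j hm hj
    have hm1 : m + 1 ≤ N := hm
    have hj1 : j + 1 ≤ N := hj
    have hm0 : m ≤ N := le_of_lt hm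
    have hj0 : j ≤ N := le_of_lt hj
    exact Dv_cell _ _ _ _
      (hopp m j (m+1) j hm0 hj0 hm1 hj0 (habs1' m) (habs0 j))
      (hopp (m+1) j (m+1) (j+1) hm1 hj0 hm1 hj1 (habs0 (m+1)) (habs1' j))
      (hopp (m+1) (j+1) m (j+1) hm1 hj1 hm0 hj1 (habs1 m) (habs0 (j+1)))
      (hopp m (j+1) m j hm0 hj1 hm0 hj0 (habs0 m) (habs1 j))
      (hopp m j (m+1) (j+1) hm0 hj0 hm1 hj1 (habs1' m) (habs1' j))
      (hopp (m+1) j m (j+1) hm1 hj0 hm0 hj1 (habs1 m) (habs1' j))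
  -- row sums
  set Srow : ℕ → ℤ := fun j => ∑ i ∈ Finset.range N, Dv (cg i j) (cg (i+1) j) with hSrowdef
  have hcyc : ∀ j : ℕ, cg N j = cg 0 j := by
    intro j
    simp only [hcgdef]
    rw [hsN, hs0, ← hHloop (s j)]
  have hrow : ∀ j : ℕ, j < N → Srow j = Srow (j+1) := by
    intro j hj
    have main : ∀ m : ℕ, m ≤ N →
        (∑ i ∈ Finset.range m, Dv (cg i j) (cg (i+1) j)) + Dv (cg m j) (cg m (j+1)) =
        Dv (cg 0 j) (cg 0 (j+1)) +
          ∑ i ∈ Finset.range m, Dv (cg i (j+1)) (cg (i+1) (j+1)) := by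
      intro m
      induction m with
      | zero => intro _; simp
      | succ m ih =>
        intro hm1
        have hm : m ≤ N := le_trans (Nat.le_succ m) hm1
        have ihm := ih hm
        have hc := hcell m j (lt_of_lt_of_le (Nat.lt_succ_self m) hm1) hj
        rw [Finset.sum_range_succ, Finset.sum_range_succ]
        linarith
    have hmain := main N (le_refl N)
    rw [hcyc j, hcyc (j+1)] at hmain
    simp only [hSrowdef]
    linarith
  have htop : Srow N = 0 := by
    simp only [hSrowdef]
    apply Finset.sum_eq_zero
    intro i hi
    have h1 : cg i N = col x₀ := by simp only [hcgdef]; rw [hsN, hH₁]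
    have h2 : cg (i+1) N = col x₀ := by simp only [hcgdef]; rw [hsN, hH₁]
    rw [h1, h2, Dv_self]
  have hS0 : Srow 0 = 0 := by
    have haux : ∀ j : ℕ, j ≤ N → Srow 0 = Srow j := by
      intro j
      induction j with
      | zero => intro _; rfl
      | succ j ih =>
        intro hj
        rw [ih (le_trans (Nat.le_succ j) hj), hrow j hj]
    rw [haux N (le_refl N), htop]
  -- bottom row is the curve
  have hbot : ∀ m : ℕ, H (s m, s 0) = γ (s m) := by
    intro m
    rw [hs0, hH₀]
  -- colors along the bottom
  have hall4 : ∀ c : ZMod 4, c = 0 ∨ c = 1 ∨ c = 2 ∨ c = 3 := by decide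
  have hcolA : ∀ m : ℕ, m ≤ N → (s m : ℝ) ≤ t₁ → cg m 0 = 1 ∨ cg m 0 = 2 := by
    intro m hm hs1
    have hmem : γ (s m) ∈ SA := Set.mem_image_of_mem γ ⟨nonneg', Subtype.coe_le_coe.mp hs1⟩
    have hw : w₁ (H (s m, s 0)) = 0 := by rw [hbot m]; exact hw₁A _ hmem
    have hcg : cg m 0 = col (H (s m, s 0)) := rfl
    rcases hall4 (cg m 0) with h | h | h | h
    · exfalso; have h2 := (col0 _ (hcg.symm.trans h)).1; rw [hw] at h2; linarith
    · left; exact h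
    · right; exact h
    · exfalso; have h2 := (col3 (s m, s 0) (hcg.symm.trans h)).1; rw [hw] at h2; linarith
  have hcolB : ∀ m : ℕ, m ≤ N → (t₁ : ℝ) ≤ s m → (s m : ℝ) ≤ t₂ →
      cg m 0 = 2 ∨ cg m 0 = 3 := by
    intro m hm hl hr
    have hmem : γ (s m) ∈ SB :=
      Set.mem_image_of_mem γ ⟨Subtype.coe_le_coe.mp hl, Subtype.coe_le_coe.mp hr⟩
    have hw : w₂ (H (s m, s 0)) = 0 := by rw [hbot m]; exact hw₂B _ hmem
    have hcg : cg m 0 = col (H (s m, s 0)) := rfl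
    rcases hall4 (cg m 0) with h | h | h | h
    · exfalso; have h2 := (col0 _ (hcg.symm.trans h)).2; rw [hw] at h2; linarith
    · exfalso; have h2 := (col1 _ (hcg.symm.trans h)).2; rw [hw] at h2; linarith
    · left; exact h
    · right; exact h
  have hcolC : ∀ m : ℕ, m ≤ N → (t₂ : ℝ) ≤ s m → (s m : ℝ) ≤ t₃ →
      cg m 0 = 3 ∨ cg m 0 = 0 := by
    intro m hm hl hr
    have hw : w₁ (H (s m, s 0)) = a := by
      rw [hbot m]
      exact hw₁C (s m) ⟨Subtype.coe_le_coe.mp hl, Subtype.coe_le_coe.mp hr⟩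
    have hcg : cg m 0 = col (H (s m, s 0)) := rfl
    rcases hall4 (cg m 0) with h | h | h | h
    · right; exact h
    · exfalso; have h2 := (col1 _ (hcg.symm.trans h)).1; rw [hw] at h2; linarith
    · exfalso; have h2 := (col2 _ (hcg.symm.trans h)).1; rw [hw] at h2; linarith
    · left; exact h
  have hcolD : ∀ m : ℕ, m ≤ N → (t₃ : ℝ) ≤ s m → cg m 0 = 0 ∨ cg m 0 = 1 := by
    intro m hm hl
    have hw : w₂ (H (s m, s 0)) = a := by
      rw [hbot m]
      exact hw₂D (s m) ⟨Subtype.coe_le_coe.mp hl, le_one'⟩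
    have hcg : cg m 0 = col (H (s m, s 0)) := rfl
    rcases hall4 (cg m 0) with h | h | h | h
    · left; exact h
    · right; exact h
    · exfalso; have h2 := (col2 _ (hcg.symm.trans h)).2; rw [hw] at h2; linarith
    · exfalso; have h2 := (col3 (s m, s 0) (hcg.symm.trans h)).2; rw [hw] at h2; linarith
  -- the starting corner has color 1
  have hc00 : cg 0 0 = 1 := by
    have hw1 : w₁ (H (s 0, s 0)) = 0 := by
      rw [hbot 0, hs0]
      exact hw₁A _ (Set.mem_image_of_mem γ ⟨le_refl _, nonneg'⟩)
    have hw2 : w₂ (H (s 0, s 0)) = a := by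
      rw [hbot 0, hs0, hloop]
      exact hw₂D 1 ⟨le_one', le_refl _⟩
    have hcg : cg 0 0 = col (H (s 0, s 0)) := rfl
    rcases hall4 (cg 0 0) with h | h | h | h
    · exfalso; have h2 := (col0 _ (hcg.symm.trans h)).1; rw [hw1] at h2; linarith
    · exact h
    · exfalso; have h2 := (col2 _ (hcg.symm.trans h)).2; rw [hw2] at h2; linarith
    · exfalso; have h2 := (col3 (s 0, s 0) (hcg.symm.trans h)).2; rw [hw2] at h2; linarith
  -- grid spacing facts
  have hmono : ∀ m : ℕ, m + 1 ≤ N → (s m : ℝ) ≤ s (m+1) := by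
    intro m hm
    rw [hsv m (le_trans (Nat.le_succ m) hm), hsv (m+1) hm]
    have h1 : ((m:ℕ):ℝ) ≤ ((m+1:ℕ):ℝ) := by push_cast; linarith
    gcongr
  have hgap : ∀ m : ℕ, m + 1 ≤ N → (s (m+1) : ℝ) ≤ (s m : ℝ) + 1 / N := by
    intro m hm
    rw [hsv m (le_trans (Nat.le_succ m) hm), hsv (m+1) hm]
    apply le_of_eq
    push_cast
    rw [← add_div]
  -- the integer lift along the bottom
  set φ : ℕ → ℤ := fun m => 1 + ∑ i ∈ Finset.range m, Dv (cg i 0) (cg (i+1) 0) with hφdef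
  have hφsucc : ∀ m : ℕ, φ (m+1) = φ m + Dv (cg m 0) (cg (m+1) 0) := by
    intro m
    simp only [hφdef]
    rw [Finset.sum_range_succ]
    ring
  have Inv : ∀ m : ℕ, m ≤ N →
      ((φ m : ZMod 4) = cg m 0) ∧
      ((s m : ℝ) ≤ t₁ → (φ m = 1 ∨ φ m = 2)) ∧
      ((t₁ : ℝ) ≤ s m → (s m : ℝ) ≤ t₂ → (φ m = 2 ∨ φ m = 3)) ∧
      ((t₂ : ℝ) ≤ s m → (s m : ℝ) ≤ t₃ → (φ m = 3 ∨ φ m = 4)) ∧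
      ((t₃ : ℝ) ≤ s m → (φ m = 4 ∨ φ m = 5)) := by
    intro m
    induction m with
    | zero =>
      intro _
      have hφ0 : φ 0 = 1 := by simp [hφdef]
      have hs0' : (s 0 : ℝ) = 0 := by rw [hs0]; simp
      refine ⟨?_, ?_, ?_, ?_, ?_⟩
      · rw [hφ0, hc00]; simp
      · intro _; left; exact hφ0
      · intro h _; exfalso; rw [hs0'] at h; linarith
      · intro h _; exfalso; rw [hs0'] at h; linarith
      · intro h; exfalso; rw [hs0'] at h; linarith
    | succ m ih =>
      intro hm1
      have hm : m ≤ N := le_trans (Nat.le_succ m) hm1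
      obtain ⟨ihc, ihA, ihB, ihC, ihD⟩ := ih hm
      have hne : cg (m+1) 0 - cg m 0 ≠ 2 :=
        hopp (m+1) 0 m 0 hm1 (Nat.zero_le _) hm (Nat.zero_le _) (habs1 m) (habs0 0)
      have hccast : (φ (m+1) : ZMod 4) = cg (m+1) 0 := by
        rw [hφsucc m]
        push_cast
        rw [ihc, Dv_cast _ _ hne]
        ring
      have hmono' := hmono m hm1
      have hgap' := hgap m hm1
      refine ⟨hccast, ?_, ?_, ?_, ?_⟩
      · -- region A
        intro hA
        have hφm := ihA (le_trans hmono' hA)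
        have hcm1 := hcolA (m+1) hm1 hA
        have hc' : cg (m+1) 0 = ((1:ℤ) : ZMod 4) ∨ cg (m+1) 0 = ((1:ℤ) : ZMod 4) + 1 := by
          rcases hcm1 with h | h
          · left; rw [h]; decide
          · right; rw [h]; decide
        have hres := walk_stay 1 (φ m) (cg m 0) (cg (m+1) 0) (by omega) ihc hc'
        rw [hφsucc m]
        omega
      · -- region B
        intro hB1 hB2
        have hcm1 := hcolB (m+1) hm1 hB1 hB2
        by_cases hsm : (t₁ : ℝ) ≤ s m
        · have hφm := ihB hsm (le_trans hmono' hB2)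
          have hc' : cg (m+1) 0 = ((2:ℤ) : ZMod 4) ∨ cg (m+1) 0 = ((2:ℤ) : ZMod 4) + 1 := by
            rcases hcm1 with h | h
            · left; rw [h]; decide
            · right; rw [h]; decide
          have hres := walk_stay 2 (φ m) (cg m 0) (cg (m+1) 0) (by omega) ihc hc'
          rw [hφsucc m]
          omega
        · push_neg at hsm
          have hφm := ihA hsm.le
          have hc' : cg (m+1) 0 = ((1:ℤ) : ZMod 4) + 1 ∨ cg (m+1) 0 = ((1:ℤ) : ZMod 4) + 2 := by
            rcases hcm1 with h | h
            · left; rw [h]; decide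
            · right; rw [h]; decide
          have hres := walk_step 1 (φ m) (cg m 0) (cg (m+1) 0) (by omega) ihc hc' hne
          rw [hφsucc m]
          omega
      · -- region C
        intro hC1 hC2
        have hcm1 := hcolC (m+1) hm1 hC1 hC2
        by_cases hsm : (t₂ : ℝ) ≤ s m
        · have hφm := ihC hsm (le_trans hmono' hC2)
          have hc' : cg (m+1) 0 = ((3:ℤ) : ZMod 4) ∨ cg (m+1) 0 = ((3:ℤ) : ZMod 4) + 1 := by
            rcases hcm1 with h | h
            · left; rw [h]; decide
            · right; rw [h]; decide
          have hres := walk_stay 3 (φ m) (cg m 0) (cg (m+1) 0) (by omega) ihc hc'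
          rw [hφsucc m]
          omega
        · push_neg at hsm
          have hl : (t₁ : ℝ) ≤ s m := by linarith
          have hφm := ihB hl hsm.le
          have hc' : cg (m+1) 0 = ((2:ℤ) : ZMod 4) + 1 ∨ cg (m+1) 0 = ((2:ℤ) : ZMod 4) + 2 := by
            rcases hcm1 with h | h
            · left; rw [h]; decide
            · right; rw [h]; decide
          have hres := walk_step 2 (φ m) (cg m 0) (cg (m+1) 0) (by omega) ihc hc' hne
          rw [hφsucc m]
          omega
      · -- region D
        intro hD1
        have hcm1 := hcolD (m+1) hm1 hD1
        by_cases hsm : (t₃ : ℝ) ≤ s m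
        · have hφm := ihD hsm
          have hc' : cg (m+1) 0 = ((4:ℤ) : ZMod 4) ∨ cg (m+1) 0 = ((4:ℤ) : ZMod 4) + 1 := by
            rcases hcm1 with h | h
            · left; rw [h]; decide
            · right; rw [h]; decide
          have hres := walk_stay 4 (φ m) (cg m 0) (cg (m+1) 0) (by omega) ihc hc'
          rw [hφsucc m]
          omega
        · push_neg at hsm
          have hl : (t₂ : ℝ) ≤ s m := by linarith
          have hφm := ihC hl hsm.le
          have hc' : cg (m+1) 0 = ((3:ℤ) : ZMod 4) + 1 ∨ cg (m+1) 0 = ((3:ℤ) : ZMod 4) + 2 := by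
            rcases hcm1 with h | h
            · left; rw [h]; decide
            · right; rw [h]; decide
          have hres := walk_step 3 (φ m) (cg m 0) (cg (m+1) 0) (by omega) ihc hc' hne
          rw [hφsucc m]
          omega
  -- conclusion
  obtain ⟨hcN, -, -, -, hD⟩ := Inv N (le_refl N)
  have hsNr : (t₃ : ℝ) ≤ (s N : ℝ) := by
    rw [hsN]
    simpa using t₃.2.2
  have hφN := hD hsNr
  have hcgN : cg N 0 = 1 := by rw [hcyc 0, hc00]
  have hφN5 : φ N = 5 := by
    rcases hφN with h | h
    · exfalso
      rw [h, hcgN] at hcN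
      exact absurd hcN (by decide)
    · exact h
  have hfin : Srow 0 = φ N - 1 := by
    simp only [hSrowdef, hφdef]
    ring
  rw [hS0, hφN5] at hfin
  norm_num at hfin
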